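/- Let d, K be positive integers, λ̃, α, γ, A > 0. Let {σ_k}_{k=1}^K be non-negative reals and {a_k}_{k=1}^K ⊂ ℝ^d with ‖a_k‖₂ ≤ A. Define recursively Σ̂₁ = 2λ̃·I_d, and for k ≥ 1: σ̄_k = max{ σ_k, α, γ·‖a_k‖_{Σ̂_k⁻¹}^{1/2} } and Σ̂_{k+1} = Σ̂_k + a_k a_kᵀ / σ̄_k². Let ι = log(1 + K A² / (d λ̃ α²)). Then Σ_{k=1}^K min{1, ‖a_k‖_{Σ̂_k⁻¹}} ≤ 2dι + 2γ² dι + 2√(dι) · √( Σ_{k=1}^K (σ_k² + α²) ). -/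

import Mathlib

open Matrix

/-- The Euclidean norm of a vector in `ℝ^d`. -/
noncomputable def euclNorm {d : ℕ} (x : Fin d → ℝ) : ℝ := Real.sqrt (∑ i, x i ^ 2)

section Aux

lemma aux_min_le_log {x : ℝ} (hx : 0 ≤ x) : min 1 x ≤ 2 * Real.log (1 + x) := by
  rcases le_total 1 x with h | h
  · rw [min_eq_left h]
    have h2 : Real.log 2 ≤ Real.log (1 + x) := by
      apply Real.log_le_log (by norm_num); linarith
    nlinarith [Real.log_two_gt_d9]
  · rw [min_eq_right h]
    have hpos : (0:ℝ) < 1 + x := by linarith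
    have key : Real.exp (x/2) ≤ 1 + x := by
      have h1 : 1 - x/2 ≤ Real.exp (-(x/2)) := by
        have := Real.add_one_le_exp (-(x/2)); linarith
      have h2 : Real.exp (-(x/2)) * Real.exp (x/2) = 1 := by
        rw [← Real.exp_add]; simp
      have h3 : 0 < Real.exp (x/2) := Real.exp_pos _
      nlinarith
    have := (Real.le_log_iff_exp_le hpos).mpr key
    linarith

-- pointwise decomposition lemma
lemma aux_pointwise (s σ α γ : ℝ) (hs : 0 ≤ s) (hα : 0 < α) (hγ : 0 < γ)
    (σb : ℝ) (hσb : σb = max σ (max α (γ * Real.sqrt s))) :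
    min 1 s ≤ (1 + γ^2) * min 1 (s^2/σb^2)
      + Real.sqrt (σ^2 + α^2) * Real.sqrt (min 1 (s^2/σb^2)) := by
  have hσbpos : 0 < σb := lt_of_lt_of_le hα (hσb ▸ le_max_of_le_right (le_max_left _ _))
  set m : ℝ := min 1 (s^2/σb^2) with hm
  have hm0 : 0 ≤ m := le_min zero_le_one (by positivity)
  have hterm2 : 0 ≤ Real.sqrt (σ^2+α^2) * Real.sqrt m := by positivity
  have hterm1 : 0 ≤ (1+γ^2) * m := by positivity
  rcases le_or_gt (max σ α) (γ * Real.sqrt s) with hc | hc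
  · -- σb = γ √s
    have hσbe : σb = γ * Real.sqrt s := by
      obtain ⟨h1, h2⟩ := max_le_iff.mp hc
      rw [hσb, max_eq_right h2, max_eq_right h1]
    have hss : σb^2 = γ^2 * s := by
      rw [hσbe, mul_pow, Real.sq_sqrt hs]
    rcases eq_or_lt_of_le hs with h0 | hspos
    · simp [← h0]; positivity
    · have hmv : m = min 1 (s/γ^2) := by
        rw [hm, hss]; congr 1
        field_simp
      have : min 1 s ≤ (1+γ^2) * m := by
        rw [hmv]
        rcases le_total (γ^2) 1 with hg | hg
        · have : min 1 s ≤ min 1 (s/γ^2) := by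
            apply min_le_min le_rfl
            rw [le_div_iff₀ (by positivity)]
            nlinarith [min_le_right 1 s, min_le_left 1 s]
          nlinarith [le_min (zero_le_one) (le_of_lt hspos) |>.trans this]
        · have h1 : γ^2 * min 1 (s/γ^2) = min (γ^2) s := by
            rw [mul_min_of_nonneg _ _ (by positivity)]
            congr 1
            · ring
            · field_simp
          have h2 : min 1 s ≤ min (γ^2) s := min_le_min hg le_rfl
          have hmin0 : (0:ℝ) ≤ min 1 (s/γ^2) := le_min zero_le_one (by positivity)
          nlinarith
      linarith
  · -- σb = max σ α
    have hσbe : σb = max σ α := by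
      rw [hσb, ← max_assoc, max_eq_left hc.le]
    have hσble : σb^2 ≤ σ^2 + α^2 := by
      rcases le_total σ α with h | h
      · rw [hσbe, max_eq_right h]; nlinarith [sq_nonneg σ]
      · rw [hσbe, max_eq_left h]; nlinarith [sq_nonneg α]
    rcases le_or_gt (min 1 s) σb with hcase | hcase
    · -- min 1 s ≤ min σb s ≤ σb * √m
      have hsqm : Real.sqrt m = min 1 (s/σb) := by
        rw [hm]
        rw [show s^2/σb^2 = (s/σb)^2 from by ring]
        have hq : 0 ≤ s/σb := by positivity
        rcases le_total (s/σb) 1 with h | h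
        · rw [min_eq_right (by nlinarith : (s/σb)^2 ≤ 1), min_eq_right h, Real.sqrt_sq hq]
        · rw [min_eq_left (by nlinarith : (1:ℝ) ≤ (s/σb)^2), min_eq_left h, Real.sqrt_one]
      have h5 : σb * Real.sqrt m = min σb s := by
        rw [hsqm, mul_min_of_nonneg _ _ hσbpos.le, mul_one, mul_div_cancel₀]
        exact hσbpos.ne'
      have h6 : min 1 s ≤ σb * Real.sqrt m := by
        rw [h5]; exact le_min hcase (min_le_right 1 s)
      have h7 : σb * Real.sqrt m ≤ Real.sqrt (σ^2+α^2) * Real.sqrt m := by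
        apply mul_le_mul_of_nonneg_right _ (Real.sqrt_nonneg _)
        rw [show σb = Real.sqrt (σb^2) from (Real.sqrt_sq hσbpos.le).symm]
        exact Real.sqrt_le_sqrt hσble
      linarith
    · -- σb < min 1 s : then m = 1
      have hm1 : m = 1 := by
        rw [hm, min_eq_left]
        rw [le_div_iff₀ (by positivity)]
        have h1 : σb < s := lt_of_lt_of_le hcase (min_le_right 1 s)
        nlinarith
      rw [hm1]
      have : min 1 s ≤ 1 := min_le_left _ _
      rw [Real.sqrt_one]
      nlinarith [sq_nonneg γ, Real.sqrt_nonneg (σ^2+α^2)]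


variable {d : ℕ}

lemma aux_psd_vecMulVec (v : Fin d → ℝ) : (vecMulVec v v).PosSemidef := by
  refine posSemidef_iff_dotProduct_mulVec.mpr ⟨?_, ?_⟩
  · ext i j; simp [vecMulVec, conjTranspose_apply, mul_comm]
  · intro x
    have : vecMulVec v v *ᵥ x = (v ⬝ᵥ x) • v := by
      ext i; simp [vecMulVec, mulVec, dotProduct, Finset.mul_sum, mul_comm, mul_assoc, mul_left_comm]
    rw [this]
    simp only [star_trivial, dotProduct_smul]
    have : x ⬝ᵥ v = v ⬝ᵥ x := dotProduct_comm x v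
    simp [smul_eq_mul, dotProduct_comm x v]
    nlinarith [sq_nonneg (v ⬝ᵥ x)]

lemma aux_posdef_smul_one (c : ℝ) (hc : 0 < c) : (c • (1 : Matrix (Fin d) (Fin d) ℝ)).PosDef := by
  refine posDef_iff_dotProduct_mulVec.mpr ⟨?_, ?_⟩
  · ext i j
    simp only [conjTranspose_apply, Matrix.smul_apply, one_apply, star_trivial]
    by_cases h : i = j
    · simp [h]
    · simp [h, Ne.symm h]
  · intro x hx
    simp only [smul_mulVec, one_mulVec, star_trivial, dotProduct_smul, smul_eq_mul]
    have hxx : 0 < x ⬝ᵥ x := by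
      have : x ⬝ᵥ x = ∑ i, x i ^ 2 := by simp [dotProduct, sq]
      rw [this]
      apply Finset.sum_pos'
      · intro i _; positivity
      · obtain ⟨i, hi⟩ := Function.ne_iff.mp hx
        exact ⟨i, Finset.mem_univ i, pow_two_pos_of_ne_zero hi⟩
    positivity

lemma aux_psd_smul {M : Matrix (Fin d) (Fin d) ℝ} (hM : M.PosSemidef) {c : ℝ} (hc : 0 ≤ c) :
    (c • M).PosSemidef := by
  refine posSemidef_iff_dotProduct_mulVec.mpr ⟨?_, ?_⟩
  · have h1 := hM.1
    rw [IsHermitian] at h1 ⊢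
    rw [conjTranspose_smul, h1]
    simp
  · intro x
    simp only [smul_mulVec, dotProduct_smul, smul_eq_mul]
    exact mul_nonneg hc (hM.dotProduct_mulVec_nonneg x)

lemma aux_det_update (M : Matrix (Fin d) (Fin d) ℝ) (hM : M.PosDef) (c : ℝ) (v : Fin d → ℝ) :
    det (M + c • vecMulVec v v) = det M * (1 + c * (v ⬝ᵥ M⁻¹ *ᵥ v)) := by
  have h1 : c • vecMulVec v v = vecMulVec (c • v) v := by
    ext i j; simp [vecMulVec, mul_assoc]
  rw [h1, vecMulVec_eq Unit]
  rw [det_add_replicateCol_mul_replicateRow hM.det_pos.ne'.isUnit]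
  congr 1
  rw [det_unique]
  have h2 : M⁻¹ * replicateCol Unit (c • v) = replicateCol Unit (M⁻¹ *ᵥ (c • v)) := (replicateCol_mulVec _ _).symm
  rw [Matrix.mul_assoc, h2]
  simp only [Pi.add_apply, Matrix.add_apply, one_apply_eq, replicateRow_mul_replicateCol_apply]
  rw [mulVec_smul, dotProduct_smul]
  simp [smul_eq_mul]

lemma aux_trace_eq_sum_eigenvalues {d : ℕ} {M : Matrix (Fin d) (Fin d) ℝ}
    (hM : M.IsHermitian) : trace M = ∑ i, hM.eigenvalues i := by
  rw [hM.trace_eq_sum_eigenvalues]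
  simp

lemma aux_det_le_trace_pow {d : ℕ} (hd : 0 < d) {M : Matrix (Fin d) (Fin d) ℝ}
    (hM : M.PosSemidef) : det M ≤ (trace M / d) ^ d := by
  have hH := hM.isHermitian
  have hev : ∀ i, 0 ≤ hH.eigenvalues i := hM.eigenvalues_nonneg
  have hdet : det M = ∏ i, hH.eigenvalues i := by
    have := hH.det_eq_prod_eigenvalues
    simpa using this
  have htr : trace M = ∑ i, hH.eigenvalues i := aux_trace_eq_sum_eigenvalues hH
  have hAMGM : ∏ i, (hH.eigenvalues i) ^ ((d:ℝ)⁻¹) ≤ ∑ i : Fin d, (d:ℝ)⁻¹ * hH.eigenvalues i := by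
    apply Real.geom_mean_le_arith_mean_weighted
    · intro i _; positivity
    · simp [Finset.card_univ]
      field_simp
    · intro i _; exact hev i
  have hrhs : ∑ i : Fin d, (d:ℝ)⁻¹ * hH.eigenvalues i = trace M / d := by
    rw [htr, ← Finset.mul_sum]; ring
  rw [hdet]
  have hL : (∏ i, (hH.eigenvalues i) ^ ((d:ℝ)⁻¹)) ^ (d:ℕ) = ∏ i, hH.eigenvalues i := by
    rw [← Finset.prod_pow]
    apply Finset.prod_congr rfl
    intro i _
    rw [← Real.rpow_natCast ((hH.eigenvalues i) ^ ((d:ℝ)⁻¹)) d, ← Real.rpow_mul (hev i)]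
    rw [inv_mul_cancel₀ (by positivity : (d:ℝ) ≠ 0), Real.rpow_one]
  rw [← hL]
  apply pow_le_pow_left₀ (Finset.prod_nonneg fun i _ => Real.rpow_nonneg (hev i) _)
  rw [← hrhs]; exact hAMGM
end Aux

/-- **Variance-weighted elliptical potential bound.** With
`Σ̂₁ = 2λ̃ I`, `σ̄_k = max{σ_k, α, γ ‖a_k‖_{Σ̂_k⁻¹}^{1/2}}`, and
`Σ̂_{k+1} = Σ̂_k + a_k a_kᵀ / σ̄_k²`, setting `ι = log(1 + K A²/(d λ̃ α²))`,
`∑_{k=1}^K min{1, ‖a_k‖_{Σ̂_k⁻¹}} ≤ 2dι + 2γ² dι + 2√(dι) √(∑_{k=1}^K (σ_k² + α²))`. -/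
theorem stmt_8 (d K : ℕ) (hd : 0 < d) (hK : 0 < K) (lam α γ A : ℝ)
    (hlam : 0 < lam) (hα : 0 < α) (hγ : 0 < γ) (hA : 0 < A)
    (σ : ℕ → ℝ) (hσ : ∀ k, 0 ≤ σ k)
    (a : ℕ → Fin d → ℝ) (ha : ∀ k, euclNorm (a k) ≤ A)
    (Sh : ℕ → Matrix (Fin d) (Fin d) ℝ) (σb : ℕ → ℝ)
    (hSh1 : Sh 1 = (2 * lam) • (1 : Matrix (Fin d) (Fin d) ℝ))
    (hσb : ∀ k, 1 ≤ k →
      σb k = max (σ k) (max α (γ * Real.sqrt (Real.sqrt (a k ⬝ᵥ ((Sh k)⁻¹ *ᵥ a k))))))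
    (hSh : ∀ k, 1 ≤ k → Sh (k + 1) = Sh k + ((σb k) ^ 2)⁻¹ • vecMulVec (a k) (a k))
    (ι : ℝ) (hι : ι = Real.log (1 + K * A ^ 2 / (d * lam * α ^ 2))) :
    ∑ k ∈ Finset.Icc 1 K, min 1 (Real.sqrt (a k ⬝ᵥ ((Sh k)⁻¹ *ᵥ a k)))
      ≤ 2 * d * ι + 2 * γ ^ 2 * d * ι
        + 2 * Real.sqrt (d * ι) * Real.sqrt (∑ k ∈ Finset.Icc 1 K, ((σ k) ^ 2 + α ^ 2)) := by
  -- positive definiteness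
  have hPD : ∀ k, 1 ≤ k → (Sh k).PosDef := by
    intro k hk
    induction k, hk using Nat.le_induction with
    | base => rw [hSh1]; exact aux_posdef_smul_one _ (by linarith)
    | succ n hn ih =>
      rw [hSh n hn]
      exact ih.add_posSemidef (aux_psd_smul (aux_psd_vecMulVec _) (by positivity))
  set q : ℕ → ℝ := fun k => a k ⬝ᵥ ((Sh k)⁻¹ *ᵥ a k) with hqdef
  have hσbα : ∀ k, 1 ≤ k → α ≤ σb k := by
    intro k hk; rw [hσb k hk]; exact le_max_of_le_right (le_max_left _ _)
  have hσbpos : ∀ k, 1 ≤ k → 0 < σb k := fun k hk => lt_of_lt_of_le hα (hσbα k hk)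
  have hq0 : ∀ k, 1 ≤ k → 0 ≤ q k := by
    intro k hk
    have h1 := ((hPD k hk).inv).posSemidef.dotProduct_mulVec_nonneg (a k)
    simpa using h1
  -- determinant recursion
  have hdetrec : ∀ k, 1 ≤ k →
      det (Sh (k+1)) = det (Sh k) * (1 + ((σb k)^2)⁻¹ * q k) := by
    intro k hk
    rw [hSh k hk, aux_det_update _ (hPD k hk)]
  have hfac : ∀ k, 1 ≤ k → (0:ℝ) < 1 + ((σb k)^2)⁻¹ * q k := by
    intro k hk
    have : 0 ≤ ((σb k)^2)⁻¹ * q k := mul_nonneg (by positivity) (hq0 k hk)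
    linarith
  -- log-det telescoping
  have htel : ∀ n : ℕ, ∑ k ∈ Finset.Icc 1 n, Real.log (1 + ((σb k)^2)⁻¹ * q k)
      = Real.log (det (Sh (n+1))) - Real.log (det (Sh 1)) := by
    intro n
    induction n with
    | zero => simp
    | succ n ih =>
      rw [Finset.sum_Icc_succ_top (Nat.le_add_left 1 n), ih, hdetrec (n+1) (Nat.le_add_left 1 n),
        Real.log_mul (hPD (n+1) (Nat.le_add_left 1 n)).det_pos.ne'
          (hfac (n+1) (Nat.le_add_left 1 n)).ne']
      ring
  -- trace bounds
  have htrub : ∀ n : ℕ, trace (Sh (n+1)) ≤ 2*lam*d + n*(A^2/α^2) ∧ 2*lam*d ≤ trace (Sh (n+1)) := by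
    intro n
    induction n with
    | zero =>
      rw [hSh1]
      constructor <;> simp [trace_smul, trace_one] <;> ring_nf <;> norm_num
    | succ n ih =>
      rw [hSh (n+1) (Nat.le_add_left 1 n), trace_add, trace_smul]
      have htr : trace (vecMulVec (a (n+1)) (a (n+1))) = ∑ i, a (n+1) i ^ 2 := by
        simp [trace, vecMulVec, diag, sq]
      have hna : 0 ≤ ∑ i, a (n+1) i ^ 2 := by positivity
      have haA : ∑ i, a (n+1) i ^ 2 ≤ A^2 := by
        have : Real.sqrt (∑ i, a (n+1) i ^2) ≤ A := ha (n+1)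
        nlinarith [Real.sq_sqrt hna, Real.sqrt_nonneg (∑ i, a (n+1) i ^2)]
      have hcle : (((σb (n+1))^2)⁻¹ : ℝ) ≤ (α^2)⁻¹ := by
        apply inv_anti₀ (by positivity)
        nlinarith [hσbα (n+1) (Nat.le_add_left 1 n), hσbpos (n+1) (Nat.le_add_left 1 n)]
      have hc0 : (0:ℝ) ≤ ((σb (n+1))^2)⁻¹ := by positivity
      constructor
      · have : ((σb (n+1))^2)⁻¹ • trace (vecMulVec (a (n+1)) (a (n+1))) ≤ A^2/α^2 := by
          rw [htr, smul_eq_mul]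
          calc ((σb (n+1))^2)⁻¹ * (∑ i, a (n+1) i ^ 2) ≤ (α^2)⁻¹ * A^2 :=
            mul_le_mul hcle haA hna (by positivity)
          _ = A^2/α^2 := by ring
        push_cast
        linarith [ih.1]
      · have : 0 ≤ ((σb (n+1))^2)⁻¹ • trace (vecMulVec (a (n+1)) (a (n+1))) := by
          rw [htr, smul_eq_mul]; positivity
        linarith [ih.2]
  -- potential bound
  set P : ℝ := ∑ k ∈ Finset.Icc 1 K, min 1 (q k / (σb k)^2) with hPdef
  have hι0 : 0 ≤ ι := by
    rw [hι]; apply Real.log_nonneg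
    have : (0:ℝ) ≤ K * A^2 / (d * lam * α^2) := by positivity
    linarith
  have hP0 : 0 ≤ P := Finset.sum_nonneg fun k hk => le_min zero_le_one
    (by have := hq0 k (Finset.mem_Icc.mp hk).1; positivity)
  have hPle : P ≤ 2 * d * ι := by
    have step1 : P ≤ ∑ k ∈ Finset.Icc 1 K, 2 * Real.log (1 + ((σb k)^2)⁻¹ * q k) := by
      apply Finset.sum_le_sum
      intro k hk
      have hk1 := (Finset.mem_Icc.mp hk).1
      have hx : (0:ℝ) ≤ ((σb k)^2)⁻¹ * q k := mul_nonneg (by positivity) (hq0 k hk1)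
      have := aux_min_le_log hx
      calc min 1 (q k / (σb k)^2) = min 1 (((σb k)^2)⁻¹ * q k) := by
            rw [div_eq_inv_mul]
        _ ≤ 2 * Real.log (1 + ((σb k)^2)⁻¹ * q k) := this
    have step2 : ∑ k ∈ Finset.Icc 1 K, 2 * Real.log (1 + ((σb k)^2)⁻¹ * q k)
        = 2 * (Real.log (det (Sh (K+1))) - Real.log (det (Sh 1))) := by
      rw [← Finset.mul_sum, htel K]
    set T : ℝ := trace (Sh (K+1)) with hTdef
    have hT1 : T ≤ 2*lam*d + K*(A^2/α^2) := (htrub K).1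
    have hT2 : 2*lam*d ≤ T := (htrub K).2
    have hTd : 0 < T / d := by
      have : (0:ℝ) < 2*lam*d := by positivity
      apply div_pos (by linarith) (by positivity)
    have hdet1 : det (Sh 1) = (2*lam)^d := by
      rw [hSh1, det_smul, det_one]; simp
    have hlog1 : Real.log (det (Sh 1)) = d * Real.log (2*lam) := by
      rw [hdet1, Real.log_pow]
    have hlogK : Real.log (det (Sh (K+1))) ≤ d * Real.log (T / d) := by
      have hdle := aux_det_le_trace_pow hd (hPD (K+1) (Nat.le_add_left 1 K)).posSemidef
      calc Real.log (det (Sh (K+1))) ≤ Real.log ((T/d)^d) :=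
            Real.log_le_log (hPD (K+1) (Nat.le_add_left 1 K)).det_pos hdle
        _ = d * Real.log (T/d) := by rw [Real.log_pow]
    have hdiff : Real.log (det (Sh (K+1))) - Real.log (det (Sh 1)) ≤ d * ι := by
      have h1 : Real.log (T/d) - Real.log (2*lam) = Real.log (T/(d*(2*lam))) := by
        rw [div_mul_eq_div_div, Real.log_div hTd.ne' (by positivity)]
      have h2 : T/(d*(2*lam)) ≤ 1 + K * A^2/(d * lam * α^2) := by
        rw [div_le_iff₀ (by positivity)]
        have hr : (1 + K * A^2/(d * lam * α^2)) * (d*(2*lam))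
            = 2*lam*d + 2*(K * (A^2/α^2)) := by field_simp
        rw [hr]
        have : (0:ℝ) ≤ K * (A^2/α^2) := by positivity
        linarith
      have h3 : Real.log (T/(d*(2*lam))) ≤ ι := by
        have hpos : (0:ℝ) < T/(d*(2*lam)) := div_pos (by nlinarith [mul_pos hlam (show (0:ℝ) < d by exact_mod_cast hd)]) (by positivity)
        rw [hι]; exact Real.log_le_log hpos h2
      calc Real.log (det (Sh (K+1))) - Real.log (det (Sh 1))
          ≤ d * Real.log (T/d) - d * Real.log (2*lam) := by rw [hlog1]; linarith
        _ = d * (Real.log (T/d) - Real.log (2*lam)) := by ring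
        _ ≤ d * ι := by rw [h1]; exact mul_le_mul_of_nonneg_left h3 (by positivity)
    calc P ≤ 2 * (Real.log (det (Sh (K+1))) - Real.log (det (Sh 1))) := by
          rw [← step2]; exact step1
      _ ≤ 2 * (d * ι) := by linarith
      _ = 2 * d * ι := by ring
  -- pointwise bound and Cauchy-Schwarz
  set S : ℝ := ∑ k ∈ Finset.Icc 1 K, ((σ k)^2 + α^2) with hSdef
  have hS0 : 0 ≤ S := Finset.sum_nonneg fun k _ => by positivity
  have hpoint : ∀ k ∈ Finset.Icc 1 K, min 1 (Real.sqrt (q k)) ≤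
      (1 + γ^2) * min 1 (q k / (σb k)^2)
        + Real.sqrt ((σ k)^2 + α^2) * Real.sqrt (min 1 (q k / (σb k)^2)) := by
    intro k hk
    have hk1 := (Finset.mem_Icc.mp hk).1
    have hq := hq0 k hk1
    have hσbe : σb k = max (σ k) (max α (γ * Real.sqrt (Real.sqrt (q k)))) := hσb k hk1
    have := aux_pointwise (Real.sqrt (q k)) (σ k) α γ (Real.sqrt_nonneg _) hα hγ (σb k) hσbe
    rwa [Real.sq_sqrt hq] at this
  have hCS : ∑ k ∈ Finset.Icc 1 K,
      Real.sqrt ((σ k)^2 + α^2) * Real.sqrt (min 1 (q k / (σb k)^2))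
      ≤ Real.sqrt S * Real.sqrt P := by
    have h1 := Finset.sum_mul_sq_le_sq_mul_sq (Finset.Icc 1 K)
      (fun k => Real.sqrt ((σ k)^2 + α^2)) (fun k => Real.sqrt (min 1 (q k / (σb k)^2)))
    have h2 : ∑ k ∈ Finset.Icc 1 K, (Real.sqrt ((σ k)^2 + α^2))^2 = S := by
      apply Finset.sum_congr rfl; intro k _; rw [Real.sq_sqrt (by positivity)]
    have h3 : ∑ k ∈ Finset.Icc 1 K, (Real.sqrt (min 1 (q k / (σb k)^2)))^2 = P := by
      apply Finset.sum_congr rfl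
      intro k hk
      have := hq0 k (Finset.mem_Icc.mp hk).1
      rw [Real.sq_sqrt (le_min zero_le_one (by positivity))]
    rw [h2, h3] at h1
    have hsum0 : 0 ≤ ∑ k ∈ Finset.Icc 1 K,
        Real.sqrt ((σ k)^2 + α^2) * Real.sqrt (min 1 (q k / (σb k)^2)) :=
      Finset.sum_nonneg fun k _ => mul_nonneg (Real.sqrt_nonneg _) (Real.sqrt_nonneg _)
    calc ∑ k ∈ Finset.Icc 1 K,
        Real.sqrt ((σ k)^2 + α^2) * Real.sqrt (min 1 (q k / (σb k)^2))
        = Real.sqrt ((∑ k ∈ Finset.Icc 1 K,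
            Real.sqrt ((σ k)^2 + α^2) * Real.sqrt (min 1 (q k / (σb k)^2)))^2) := by
          rw [Real.sqrt_sq hsum0]
      _ ≤ Real.sqrt (S * P) := Real.sqrt_le_sqrt h1
      _ = Real.sqrt S * Real.sqrt P := Real.sqrt_mul hS0 _
  -- combine
  have hmain : ∑ k ∈ Finset.Icc 1 K, min 1 (Real.sqrt (q k))
      ≤ (1 + γ^2) * P + Real.sqrt S * Real.sqrt P := by
    calc ∑ k ∈ Finset.Icc 1 K, min 1 (Real.sqrt (q k))
        ≤ ∑ k ∈ Finset.Icc 1 K, ((1 + γ^2) * min 1 (q k / (σb k)^2)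
          + Real.sqrt ((σ k)^2 + α^2) * Real.sqrt (min 1 (q k / (σb k)^2))) :=
          Finset.sum_le_sum hpoint
      _ = (1 + γ^2) * P + ∑ k ∈ Finset.Icc 1 K,
          Real.sqrt ((σ k)^2 + α^2) * Real.sqrt (min 1 (q k / (σb k)^2)) := by
          rw [Finset.sum_add_distrib, ← Finset.mul_sum]
      _ ≤ (1 + γ^2) * P + Real.sqrt S * Real.sqrt P := by linarith
  have hsqrtP : Real.sqrt P ≤ 2 * Real.sqrt (d * ι) := by
    calc Real.sqrt P ≤ Real.sqrt (2 * (d * ι)) := by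
          apply Real.sqrt_le_sqrt; linarith [hPle]
      _ = Real.sqrt 2 * Real.sqrt (d * ι) := Real.sqrt_mul (by norm_num) _
      _ ≤ 2 * Real.sqrt (d * ι) := by
          apply mul_le_mul_of_nonneg_right _ (Real.sqrt_nonneg _)
          nlinarith [Real.sq_sqrt (show (0:ℝ) ≤ 2 by norm_num), Real.sqrt_nonneg 2]
  have hfin : (1 + γ^2) * P + Real.sqrt S * Real.sqrt P
      ≤ 2 * d * ι + 2 * γ^2 * d * ι + 2 * Real.sqrt (d * ι) * Real.sqrt S := by
    have h1 : (1 + γ^2) * P ≤ (1 + γ^2) * (2 * d * ι) :=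
      mul_le_mul_of_nonneg_left hPle (by positivity)
    have h2 : Real.sqrt S * Real.sqrt P ≤ Real.sqrt S * (2 * Real.sqrt (d * ι)) :=
      mul_le_mul_of_nonneg_left hsqrtP (Real.sqrt_nonneg _)
    have e1 : (1+γ^2)*(2*(d:ℝ)*ι) = 2*d*ι + 2*γ^2*d*ι := by ring
    have e2 : Real.sqrt S * (2*Real.sqrt (d*ι)) = 2*Real.sqrt (d*ι)*Real.sqrt S := by ring
    linarith [h1, h2]
  have hgoal := le_trans hmain hfin
  simpa only [hqdef] using hgoal
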